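/- Let Γ be a simple graph with finite vertex set S whose complement Γ^opp is connected, let A be a unital C*-algebra with 1 ≠ 0, and let (V_s)_{s∈S} satisfy the Toeplitz–Artin relations for Γ. Then for every proper subset T ⊊ S, the product ∏_{s∈T} (1 − V_s V_s*) (taken in any fixed order of T) is nonzero. -/

import Mathlib

def SatisfiesToeplitzArtin {S A : Type*} [Ring A] [StarRing A]
    (Γ : SimpleGraph S) (V : S → A) : Prop :=
  (∀ s, star (V s) * V s = 1) ∧
  (∀ s t, Γ.Adj s t → V s * V t = V t * V s) ∧
  (∀ s t, Γ.Adj s t → star (V s) * V t = V t * star (V s)) ∧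
  (∀ s t, s ≠ t → ¬ Γ.Adj s t → star (V s) * V t = 0)

section Aux
variable {S A : Type*} [Ring A] [StarRing A] {Γ : SimpleGraph S} {V : S → A}

lemma TA.lemA (hTA : SatisfiesToeplitzArtin Γ V) (s : S) :
    ∀ (l : List S), s ∉ l →
      star (V s) * (l.map V).prod = 0 ∨
      star (V s) * (l.map V).prod = (l.map V).prod * star (V s) := by
  intro l
  induction l with
  | nil => intro _; right; simp
  | cons u l ih =>
    intro hs
    have hsu : s ≠ u := fun h => hs (h ▸ (List.mem_cons_self (a := u) (l := l)))
    have hsl : s ∉ l := fun h => hs (List.mem_cons_of_mem u h)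
    by_cases hadj : Γ.Adj s u
    · have hc := hTA.2.2.1 s u hadj
      rcases ih hsl with h0 | hcomm
      · left
        rw [List.map_cons, List.prod_cons, ← mul_assoc, hc, mul_assoc, h0, mul_zero]
      · right
        rw [List.map_cons, List.prod_cons, ← mul_assoc, hc, mul_assoc, hcomm,
          ← mul_assoc]
    · left
      have h0 := hTA.2.2.2 s u hsu hadj
      rw [List.map_cons, List.prod_cons, ← mul_assoc, h0, zero_mul]

lemma TA.lemB (hTA : SatisfiesToeplitzArtin Γ V) {t u : S} (p : (Γᶜ).Walk t u)
    (s : S) (hs : s ∈ p.support) (hst : s ≠ t) :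
    star (V s) * (p.support.map V).prod = 0 := by
  induction p with
  | nil => simp at hs; exact absurd hs hst
  | @cons a b c hadj q ih =>
    rw [SimpleGraph.Walk.support_cons] at hs ⊢
    have hsq : s ∈ q.support := by
      rcases List.mem_cons.1 hs with h | h
      · exact absurd h hst
      · exact h
    by_cases hGadj : Γ.Adj s a
    · have hsb : s ≠ b := by
        rintro rfl
        rw [SimpleGraph.compl_adj] at hadj
        exact hadj.2 hGadj.symm
      have hc := hTA.2.2.1 s a hGadj
      rw [List.map_cons, List.prod_cons, ← mul_assoc, hc, mul_assoc, ih hsq hsb, mul_zero]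
    · have h0 := hTA.2.2.2 s a hst hGadj
      simp only [List.map_cons, List.prod_cons, ← mul_assoc, h0, zero_mul]

lemma TA.star_prod_self (l : List A) (h : ∀ x ∈ l, star x * x = 1) :
    star l.prod * l.prod = 1 := by
  induction l with
  | nil => simp
  | cons a l ih =>
    simp only [List.prod_cons, star_mul]
    rw [mul_assoc, ← mul_assoc (star a), h a ((List.mem_cons_self (a := a) (l := l))), one_mul,
      ih (fun x hx => h x (List.mem_cons_of_mem a hx))]

lemma TA.absorb (V : S → A) (W : A) :
    ∀ (l : List S), (∀ s ∈ l, star (V s) * W = 0) →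
      (l.map (fun s => (1 : A) - V s * star (V s))).prod * W = W := by
  intro l
  induction l with
  | nil => intro _; simp
  | cons a l ih =>
    intro h
    have hW := ih (fun s hs => h s (List.mem_cons_of_mem a hs))
    simp only [List.map_cons, List.prod_cons, mul_assoc, hW]
    have : V a * (star (V a) * W) = 0 := by rw [h a ((List.mem_cons_self (a := a) (l := l))), mul_zero]
    rw [sub_mul, one_mul, mul_assoc, this, sub_zero]

end Aux

theorem proper_defect_product_ne_zero {S A : Type*} [Fintype S] [DecidableEq S]
    [NormedRing A] [StarRing A] [CStarRing A] [NormedAlgebra ℂ A]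
    [StarModule ℂ A] [CompleteSpace A]
    (hA : (1 : A) ≠ 0)
    (Γ : SimpleGraph S) (V : S → A) (hTA : SatisfiesToeplitzArtin Γ V)
    (hconn : (Γᶜ).Connected)
    (T : Finset S) (hT : T ≠ Finset.univ)
    (L : List S) (hnd : L.Nodup) (hLT : L.toFinset = T) :
    (L.map fun s => (1 : A) - V s * star (V s)).prod ≠ 0 := by
  obtain ⟨t, ht⟩ : ∃ t, t ∉ T := by
    by_contra h
    push_neg at h
    exact hT (Finset.eq_univ_iff_forall.2 h)
  have hw : ∀ s : S, Nonempty ((Γᶜ).Walk t s) := fun s => (hconn.preconnected t s)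
  set M : S → A := fun s => (((hw s).some.support).map V).prod with hM
  set W : A := (L.map M).prod with hWdef
  -- key annihilation
  have key : ∀ s ∈ L, star (V s) * W = 0 := by
    have main : ∀ (K : List S) (s : S), s ≠ t → s ∈ K →
        star (V s) * (K.map M).prod = 0 := by
      intro K
      induction K with
      | nil => intro s _ hs; simp at hs
      | cons a K ih =>
        intro s hst hs
        simp only [List.map_cons, List.prod_cons, ← mul_assoc]
        by_cases hmem : s ∈ (hw a).some.support
        · rw [show star (V s) * M a = 0 from TA.lemB hTA _ s hmem hst, zero_mul]
        · rcases TA.lemA hTA s _ hmem with h0 | hcomm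
          · rw [show star (V s) * M a = 0 from h0, zero_mul]
          · have hsK : s ∈ K := by
              rcases List.mem_cons.1 hs with h | h
              · exact absurd ((h ▸ (hw a).some.end_mem_support : s ∈ (hw a).some.support)) hmem
              · exact h
            rw [show star (V s) * M a = M a * star (V s) from hcomm, mul_assoc,
              ih s hst hsK, mul_zero]
    intro s hs
    have hst : s ≠ t := fun h => ht (h ▸ (hLT ▸ List.mem_toFinset.2 hs))
    exact main L s hst hs
  have hPW : (L.map fun s => (1 : A) - V s * star (V s)).prod * W = W :=
    TA.absorb V W L key
  have hW1 : star W * W = 1 := by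
    apply TA.star_prod_self
    intro x hx
    obtain ⟨s, _, rfl⟩ := List.mem_map.1 hx
    apply TA.star_prod_self
    intro y hy
    obtain ⟨u, _, rfl⟩ := List.mem_map.1 hy
    exact hTA.1 u
  intro hP
  rw [hP, zero_mul] at hPW
  rw [← hPW, mul_zero] at hW1
  exact hA hW1.symm
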